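/- Let p be an odd prime, e ≥ 1, n = p^e, 1 ≤ f ≤ e. If x, y ∈ G_f generate G_f, then x, y, and xy all have order exactly n. -/

import Mathlib

/-- The relations for the group `G_f = ⟨g, h | g^n = h^n = 1, g⁻¹hg = h^q⟩`. -/
def fermatRels (n q : ℕ) : Set (FreeGroup (Fin 2)) :=
  {FreeGroup.of 0 ^ n, FreeGroup.of 1 ^ n,
   (FreeGroup.of 0)⁻¹ * FreeGroup.of 1 * FreeGroup.of 0 * (FreeGroup.of 1 ^ q)⁻¹}

/-- The group `G_f` (with `n = p^e`, `q = 1 + p^f`). -/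
abbrev Gf (n q : ℕ) := PresentedGroup (fermatRels n q)

/-- The generator `g` of `G_f`. -/
def gGen (n q : ℕ) : Gf n q := PresentedGroup.of 0

/-- The generator `h` of `G_f`. -/
def hGen (n q : ℕ) : Gf n q := PresentedGroup.of 1


open Finset

/-- Step lemma: if `p^k ∣ x - 1` then `p^(k+1) ∣ x^p - 1`. -/
lemma fermat_aux_pow_p {p : ℕ} (hp : p.Prime) {x : ℤ} {k : ℕ} (hk : 1 ≤ k)
    (h : (p : ℤ) ^ k ∣ x - 1) : (p : ℤ) ^ (k + 1) ∣ x ^ p - 1 := by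
  have hgeom : (∑ i ∈ range p, x ^ i) * (x - 1) = x ^ p - 1 := geom_sum_mul x p
  have hx1 : (p : ℤ) ∣ x - 1 := dvd_trans (dvd_pow_self _ (by omega)) h
  have hsum : (p : ℤ) ∣ ∑ i ∈ range p, x ^ i := by
    have : (p : ℤ) ∣ (∑ i ∈ range p, x ^ i) - p := by
      have : (∑ i ∈ range p, x ^ i) - p = ∑ i ∈ range p, (x ^ i - 1) := by
        simp [Finset.sum_sub_distrib]
      rw [this]
      refine Finset.dvd_sum fun i _ => ?_
      have : (∑ j ∈ range i, x ^ j) * (x - 1) = x ^ i - 1 := geom_sum_mul x i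
      exact this ▸ Dvd.dvd.mul_left hx1 _
    have := dvd_add this (dvd_refl (p : ℤ))
    simpa using this
  calc (p:ℤ)^(k+1) = p^k * p := by ring
  _ ∣ (x-1) * (∑ i ∈ range p, x ^ i) := mul_dvd_mul h hsum
  _ = x ^ p - 1 := by rw [mul_comm]; exact hgeom

lemma fermat_aux_pow_pt {p : ℕ} (hp : p.Prime) {x : ℤ} {k : ℕ} (hk : 1 ≤ k)
    (h : (p : ℤ) ^ k ∣ x - 1) : ∀ t : ℕ, (p : ℤ) ^ (k + t) ∣ x ^ (p ^ t) - 1 := by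
  intro t
  induction t with
  | zero => simpa using h
  | succ t ih =>
    have h2 := fermat_aux_pow_p hp (k := k + t) (by omega) ih
    rw [← pow_mul, ← pow_succ] at h2
    simpa [show k + (t + 1) = k + t + 1 by omega] using h2

lemma fermat_aux_sum_p {p : ℕ} (hodd : Odd p) {x : ℤ} {K : ℕ} (hK : 1 ≤ K)
    (h : (p : ℤ) ^ K ∣ x - 1) : (p : ℤ) ^ (K + 1) ∣ (∑ j ∈ range p, x ^ j) - p := by
  have hx1 : (p : ℤ) ∣ x - 1 := dvd_trans (dvd_pow_self _ (by omega)) h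
  have key : (∑ j ∈ range p, x ^ j) - p = (x - 1) * ∑ j ∈ range p, ∑ i ∈ range j, x ^ i := by
    rw [Finset.mul_sum]
    have : (∑ j ∈ range p, x ^ j) - p = ∑ j ∈ range p, (x ^ j - 1) := by
      simp [Finset.sum_sub_distrib]
    rw [this]
    refine Finset.sum_congr rfl fun j _ => ?_
    rw [mul_comm]
    exact (geom_sum_mul x j).symm
  have hT : (p : ℤ) ∣ ∑ j ∈ range p, ∑ i ∈ range j, x ^ i := by
    have h1 : (p : ℤ) ∣ (∑ j ∈ range p, ∑ i ∈ range j, x ^ i) - ∑ j ∈ range p, (j : ℤ) := by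
      have : (∑ j ∈ range p, ∑ i ∈ range j, x ^ i) - ∑ j ∈ range p, (j : ℤ) =
          ∑ j ∈ range p, ∑ i ∈ range j, (x ^ i - 1) := by
        rw [← Finset.sum_sub_distrib]
        refine Finset.sum_congr rfl fun j _ => ?_
        simp [Finset.sum_sub_distrib]
      rw [this]
      refine Finset.dvd_sum fun j _ => Finset.dvd_sum fun i _ => ?_
      have : (∑ l ∈ range i, x ^ l) * (x - 1) = x ^ i - 1 := geom_sum_mul x i
      exact this ▸ Dvd.dvd.mul_left hx1 _
    have h2 : (p : ℤ) ∣ ∑ j ∈ range p, (j : ℤ) := by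
      obtain ⟨m, hm⟩ := hodd
      have hs : (∑ j ∈ range p, j) = p * m := by
        have h3 := Finset.sum_range_id_mul_two p
        have h4 : p * (p - 1) = p * m * 2 := by
          rw [hm]; simp [Nat.add_sub_cancel]; ring
        have := h3.trans h4
        exact Nat.eq_of_mul_eq_mul_right (by norm_num) this
      have : (∑ j ∈ range p, (j : ℤ)) = (p : ℤ) * m := by
        rw [← Nat.cast_sum, hs]; push_cast; ring
      rw [this]
      exact Dvd.intro _ rfl
    have := dvd_add h1 h2
    simpa using this
  rw [key, pow_succ]
  exact mul_dvd_mul h hT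

lemma fermat_geom_prod (x : ℤ) (a b : ℕ) :
    ∑ i ∈ range (a * b), x ^ i = (∑ i ∈ range a, x ^ i) * (∑ j ∈ range b, (x ^ a) ^ j) := by
  induction b with
  | zero => simp
  | succ b ih =>
    have hsplit : ∑ i ∈ range (a * b + a), x ^ i =
        (∑ i ∈ range (a * b), x ^ i) + ∑ i ∈ Ico (a * b) (a * b + a), x ^ i :=
      (Finset.sum_range_add_sum_Ico _ (Nat.le_add_right _ _)).symm
    rw [Nat.mul_succ, hsplit, Finset.sum_range_succ, mul_add, ← ih]
    congr 1
    rw [Finset.sum_Ico_eq_sum_range]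
    simp only [Nat.add_sub_cancel_left]
    rw [Finset.sum_mul]
    refine Finset.sum_congr rfl fun i _ => ?_
    rw [← pow_mul, ← pow_add, add_comm (a*b) i, mul_comm a b]

lemma fermat_aux_sum_pt {p : ℕ} (hp : p.Prime) (hodd : Odd p) {x : ℤ} {k : ℕ} (hk : 1 ≤ k)
    (h : (p : ℤ) ^ k ∣ x - 1) :
    ∀ t : ℕ, (p : ℤ) ^ (k + t) ∣ (∑ i ∈ range (p ^ t), x ^ i) - p ^ t := by
  intro t
  induction t with
  | zero => simp
  | succ t ih =>
    have hprod := fermat_geom_prod x (p ^ t) p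
    rw [← pow_succ] at hprod
    set A : ℤ := ∑ i ∈ range (p ^ t), x ^ i with hA
    set B : ℤ := ∑ j ∈ range p, (x ^ p ^ t) ^ j with hB
    have hy : (p : ℤ) ^ (k + t) ∣ x ^ p ^ t - 1 := fermat_aux_pow_pt hp hk h t
    have hBp : (p : ℤ) ^ (k + t + 1) ∣ B - p := fermat_aux_sum_p hodd (by omega) hy
    have hpB : (p : ℤ) ∣ B := by
      have h1 : (p : ℤ) ∣ B - p := dvd_trans (dvd_pow_self _ (by omega)) hBp
      have := dvd_add h1 (dvd_refl (p : ℤ))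
      simpa using this
    have key : A * B - (p : ℤ) ^ (t + 1) = (A - p ^ t) * B + p ^ t * (B - p) := by
      push_cast; ring
    rw [hprod, show k + (t + 1) = k + t + 1 from rfl, key]
    refine dvd_add ?_ ?_
    · rw [pow_succ]
      exact mul_dvd_mul ih hpB
    · exact Dvd.dvd.mul_left hBp _


namespace FermatAux

variable {n q : ℕ}

lemma mk_rel_eq_one {r : FreeGroup (Fin 2)} (h : r ∈ fermatRels n q) :
    PresentedGroup.mk (fermatRels n q) r = 1 := by
  have hmem : r ∈ Subgroup.normalClosure (fermatRels n q) := Subgroup.subset_normalClosure h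
  exact (QuotientGroup.eq_one_iff r).mpr hmem

lemma g_pow_n : (gGen n q) ^ n = 1 := by
  have := mk_rel_eq_one (n := n) (q := q) (r := FreeGroup.of 0 ^ n) (by left; rfl)
  rw [map_pow] at this
  exact this

lemma h_pow_n : (hGen n q) ^ n = 1 := by
  have := mk_rel_eq_one (n := n) (q := q) (r := FreeGroup.of 1 ^ n) (by right; left; rfl)
  rw [map_pow] at this
  exact this

lemma conj_rel : (gGen n q)⁻¹ * hGen n q * gGen n q = (hGen n q) ^ q := by
  have := mk_rel_eq_one (n := n) (q := q)
    (r := (FreeGroup.of 0)⁻¹ * FreeGroup.of 1 * FreeGroup.of 0 * (FreeGroup.of 1 ^ q)⁻¹)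
    (by right; right; rfl)
  rw [map_mul, map_mul, map_mul, map_inv, map_inv, map_pow] at this
  have h2 := mul_eq_one_iff_eq_inv.mp this
  rw [inv_inv] at h2
  exact h2

lemma h_pow_mul_g : ∀ a : ℕ, (hGen n q) ^ a * gGen n q = gGen n q * (hGen n q) ^ (a * q) := by
  intro a
  have hc : (gGen n q)⁻¹ * (hGen n q) ^ a * gGen n q = ((hGen n q) ^ q) ^ a := by
    have := map_pow (MulAut.conj (gGen n q)⁻¹) (hGen n q) a
    simp only [MulAut.conj_apply, inv_inv] at this
    rw [← conj_rel, ← this]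
  have : (hGen n q) ^ a * gGen n q = gGen n q * ((hGen n q) ^ q) ^ a := by
    rw [← hc]; group
  rw [this, ← pow_mul, mul_comm q a]

lemma h_pow_mul_g_pow : ∀ (v a : ℕ),
    (hGen n q) ^ a * (gGen n q) ^ v = (gGen n q) ^ v * (hGen n q) ^ (a * q ^ v) := by
  intro v
  induction v with
  | zero => simp
  | succ v ih =>
    intro a
    rw [pow_succ, ← mul_assoc, ih a, mul_assoc, h_pow_mul_g, ← mul_assoc, ← pow_succ]
    congr 2
    rw [pow_succ]
    ring

lemma g_pow_inv (hn : 1 ≤ n) (u : ℕ) : ((gGen n q) ^ u)⁻¹ = (gGen n q) ^ (u * (n - 1)) := by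
  rw [inv_eq_iff_mul_eq_one, ← pow_add]
  have h2 : u + u * (n - 1) = n * u := by
    cases n with | zero => omega | succ m => simp only [Nat.succ_sub_one]; ring
  rw [h2, pow_mul, g_pow_n, one_pow]

lemma h_pow_inv (hn : 1 ≤ n) (s : ℕ) : ((hGen n q) ^ s)⁻¹ = (hGen n q) ^ (s * (n - 1)) := by
  rw [inv_eq_iff_mul_eq_one, ← pow_add]
  have h2 : s + s * (n - 1) = n * s := by
    cases n with | zero => omega | succ m => simp only [Nat.succ_sub_one]; ring
  rw [h2, pow_mul, h_pow_n, one_pow]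

lemma normal_form (hn : 1 ≤ n) (z : Gf n q) :
    ∃ u s : ℕ, z = (gGen n q) ^ u * (hGen n q) ^ s := by
  let S : Subgroup (Gf n q) :=
    { carrier := {z | ∃ u s : ℕ, z = (gGen n q) ^ u * (hGen n q) ^ s}
      one_mem' := ⟨0, 0, by simp⟩
      mul_mem' := by
        rintro a b ⟨u, s, rfl⟩ ⟨v, t, rfl⟩
        refine ⟨u + v, s * q ^ v + t, ?_⟩
        rw [mul_assoc, ← mul_assoc ((hGen n q) ^ s), h_pow_mul_g_pow, pow_add, pow_add]
        group
      inv_mem' := by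
        rintro a ⟨u, s, rfl⟩
        refine ⟨u * (n - 1), s * (n - 1) * q ^ (u * (n - 1)), ?_⟩
        rw [mul_inv_rev, g_pow_inv hn, h_pow_inv hn, h_pow_mul_g_pow] }
  have : z ∈ S := by
    refine PresentedGroup.generated_by _ S ?_ z
    intro j
    fin_cases j
    · exact ⟨1, 0, by simp [gGen]⟩
    · exact ⟨0, 1, by simp [hGen]⟩
  exact this

lemma pow_formula (u s : ℕ) : ∀ m : ℕ,
    ((gGen n q) ^ u * (hGen n q) ^ s) ^ m =
      (gGen n q) ^ (u * m) * (hGen n q) ^ (s * ∑ i ∈ range m, (q ^ u) ^ i) := by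
  intro m
  induction m with
  | zero => simp
  | succ m ih =>
    rw [pow_succ, ih, mul_assoc, ← mul_assoc ((hGen n q) ^ (s * _)), h_pow_mul_g_pow,
      geom_sum_succ, mul_assoc, ← pow_add, ← mul_assoc, ← pow_add]
    congr 1 <;> congr 1 <;> ring

end FermatAux

namespace FermatAux

variable {n q : ℕ}

lemma mem_rels_cases {r : FreeGroup (Fin 2)} (h : r ∈ fermatRels n q) :
    r = FreeGroup.of 0 ^ n ∨ r = FreeGroup.of 1 ^ n ∨
      r = (FreeGroup.of 0)⁻¹ * FreeGroup.of 1 * FreeGroup.of 0 * (FreeGroup.of 1 ^ q)⁻¹ := by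
  simpa [fermatRels] using h

/-- The homomorphism `G_f →* Multiplicative (ZMod m)` with `g ↦ 1`, `h ↦ 0`. -/
def phiG (n q m : ℕ) (hm : ((n : ℕ) : ZMod m) = 0) : Gf n q →* Multiplicative (ZMod m) :=
  PresentedGroup.toGroup (f := ![Multiplicative.ofAdd (1 : ZMod m), 1]) (by
    intro r hr
    rcases mem_rels_cases hr with rfl | rfl | rfl
    · rw [map_pow, FreeGroup.lift_apply_of]
      show (Multiplicative.ofAdd (1 : ZMod m)) ^ n = 1
      rw [← ofAdd_nsmul, nsmul_eq_mul, mul_one, hm]; rfl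
    · rw [map_pow, FreeGroup.lift_apply_of]
      show (1 : Multiplicative (ZMod m)) ^ n = 1
      simp
    · simp only [map_mul, map_inv, map_pow, FreeGroup.lift_apply_of]
      show (Multiplicative.ofAdd (1 : ZMod m))⁻¹ * 1 * Multiplicative.ofAdd (1 : ZMod m) *
        ((1 : Multiplicative (ZMod m)) ^ q)⁻¹ = 1
      group)

@[simp] lemma phiG_g (m : ℕ) (hm : ((n : ℕ) : ZMod m) = 0) :
    phiG n q m hm (gGen n q) = Multiplicative.ofAdd (1 : ZMod m) := by
  show phiG n q m hm (PresentedGroup.of 0) = _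
  rw [phiG, PresentedGroup.toGroup.of]
  rfl

@[simp] lemma phiG_h (m : ℕ) (hm : ((n : ℕ) : ZMod m) = 0) :
    phiG n q m hm (hGen n q) = 1 := by
  show phiG n q m hm (PresentedGroup.of 1) = _
  rw [phiG, PresentedGroup.toGroup.of]
  rfl

/-- The homomorphism `G_f →* Multiplicative (ZMod m)` with `g ↦ 0`, `h ↦ 1`,
for `m` dividing both `n` and `q - 1`. -/
def phiH (n q m : ℕ) (hm : ((n : ℕ) : ZMod m) = 0) (hqm : ((q : ℕ) : ZMod m) = 1) :
    Gf n q →* Multiplicative (ZMod m) :=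
  PresentedGroup.toGroup (f := ![1, Multiplicative.ofAdd (1 : ZMod m)]) (by
    intro r hr
    rcases mem_rels_cases hr with rfl | rfl | rfl
    · rw [map_pow, FreeGroup.lift_apply_of]
      show (1 : Multiplicative (ZMod m)) ^ n = 1
      simp
    · rw [map_pow, FreeGroup.lift_apply_of]
      show (Multiplicative.ofAdd (1 : ZMod m)) ^ n = 1
      rw [← ofAdd_nsmul, nsmul_eq_mul, mul_one, hm]; rfl
    · simp only [map_mul, map_inv, map_pow, FreeGroup.lift_apply_of]
      show (1 : Multiplicative (ZMod m))⁻¹ * Multiplicative.ofAdd (1 : ZMod m) * 1 *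
        ((Multiplicative.ofAdd (1 : ZMod m)) ^ q)⁻¹ = 1
      rw [← ofAdd_nsmul, nsmul_eq_mul, mul_one, hqm]
      group)

@[simp] lemma phiH_g (m : ℕ) (hm : ((n : ℕ) : ZMod m) = 0) (hqm : ((q : ℕ) : ZMod m) = 1) :
    phiH n q m hm hqm (gGen n q) = 1 := by
  show phiH n q m hm hqm (PresentedGroup.of 0) = _
  rw [phiH, PresentedGroup.toGroup.of]
  rfl

@[simp] lemma phiH_h (m : ℕ) (hm : ((n : ℕ) : ZMod m) = 0) (hqm : ((q : ℕ) : ZMod m) = 1) :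
    phiH n q m hm hqm (hGen n q) = Multiplicative.ofAdd (1 : ZMod m) := by
  show phiH n q m hm hqm (PresentedGroup.of 1) = _
  rw [phiH, PresentedGroup.toGroup.of]
  rfl

end FermatAux

namespace FermatAux

variable {n q : ℕ}

lemma addRight_pow (c : ZMod n) : ∀ (k : ℕ) (a : ZMod n),
    ((Equiv.addRight c) ^ k) a = a + k • c := by
  intro k
  induction k with
  | zero => intro a; simp
  | succ k ih =>
    intro a
    rw [pow_succ, Equiv.Perm.mul_apply, ih, succ_nsmul]
    simp only [Equiv.coe_addRight, nsmul_eq_mul]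
    ring

lemma h_pow_eq_one_imp (hcop : Nat.Coprime q n)
    (hqn : (ZMod.unitOfCoprime q hcop) ^ n = 1) {k : ℕ}
    (hk : (hGen n q) ^ k = 1) : ((k : ℕ) : ZMod n) = 0 := by
  set w : (ZMod n)ˣ := ZMod.unitOfCoprime q hcop with hw
  set gP : Equiv.Perm (ZMod n) := MulAction.toPermHom (ZMod n)ˣ (ZMod n) w⁻¹ with hgP
  set hP : Equiv.Perm (ZMod n) := Equiv.addRight (1 : ZMod n) with hhP
  have hrel : ∀ r ∈ fermatRels n q, FreeGroup.lift ![gP, hP] r = 1 := by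
    intro r hr
    rcases mem_rels_cases hr with rfl | rfl | rfl
    · rw [map_pow, FreeGroup.lift_apply_of]
      show gP ^ n = 1
      rw [hgP, ← map_pow, inv_pow, hqn, inv_one, map_one]
    · rw [map_pow, FreeGroup.lift_apply_of]
      show hP ^ n = 1
      ext a
      rw [hhP, addRight_pow, nsmul_eq_mul, mul_one, ZMod.natCast_self]
      simp
    · simp only [map_mul, map_inv, map_pow, FreeGroup.lift_apply_of]
      show gP⁻¹ * hP * gP * (hP ^ q)⁻¹ = 1
      have hq : hP ^ q = Equiv.addRight ((q : ℕ) : ZMod n) := by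
        ext a
        rw [hhP, addRight_pow, nsmul_eq_mul, mul_one]
        simp
      have hginv : gP⁻¹ = MulAction.toPermHom (ZMod n)ˣ (ZMod n) w := by
        rw [hgP, ← map_inv, inv_inv]
      rw [mul_inv_eq_iff_eq_mul, one_mul, hq]
      ext a
      simp only [Equiv.Perm.mul_apply, hhP, hgP, Equiv.coe_addRight,
        MulAction.toPermHom_apply, MulAction.toPerm_apply, Equiv.Perm.inv_def,
        MulAction.toPerm_symm_apply, inv_inv]
      rw [smul_add, smul_inv_smul]
      have : w • (1 : ZMod n) = (q : ZMod n) := by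
        rw [Units.smul_def, smul_eq_mul, mul_one, hw, ZMod.coe_unitOfCoprime]
      rw [this]
  have hπ := PresentedGroup.toGroup hrel
  have hπh : (PresentedGroup.toGroup hrel) (hGen n q) = hP := by
    show (PresentedGroup.toGroup hrel) (PresentedGroup.of 1) = hP
    rw [PresentedGroup.toGroup.of]
    rfl
  have := congrArg (PresentedGroup.toGroup hrel) hk
  rw [map_pow, map_one, hπh] at this
  have := congrArg (fun σ : Equiv.Perm (ZMod n) => σ 0) this
  simp only [Equiv.Perm.one_apply] at this
  rw [addRight_pow, nsmul_eq_mul, mul_one, zero_add] at this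
  exact this

end FermatAux

namespace FermatAux

lemma sub_one_dvd_pow_sub_one (x : ℤ) (u : ℕ) : x - 1 ∣ x ^ u - 1 :=
  ⟨∑ i ∈ range u, x ^ i, by rw [← geom_sum_mul]; ring⟩

lemma mult_zmod_pow_self (p : ℕ) (m : Multiplicative (ZMod p)) : m ^ p = 1 := by
  have h : (m ^ p).toAdd = (1 : Multiplicative (ZMod p)).toAdd := by
    rw [toAdd_pow, nsmul_eq_mul, ZMod.natCast_self, zero_mul]; rfl
  exact Multiplicative.toAdd.injective h

lemma closure_single_ne_top (p : ℕ) (hp : p.Prime)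
    (a : Multiplicative (ZMod p) × Multiplicative (ZMod p)) :
    Subgroup.closure {a} ≠ ⊤ := by
  intro ha
  have hap : a ^ p = 1 := by
    have h1 : (a ^ p).1 = 1 := by rw [Prod.pow_fst]; exact mult_zmod_pow_self p a.1
    have h2 : (a ^ p).2 = 1 := by rw [Prod.pow_snd]; exact mult_zmod_pow_self p a.2
    exact Prod.ext h1 h2
  have hord : orderOf a ≤ p := Nat.le_of_dvd hp.pos (orderOf_dvd_of_pow_eq_one hap)
  have hcard : Nat.card (Multiplicative (ZMod p) × Multiplicative (ZMod p)) = p * p := by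
    rw [Nat.card_prod, Nat.card_congr Multiplicative.toAdd, Nat.card_zmod]
  have h1 : orderOf a = p * p := by
    rw [← Nat.card_zpowers, Subgroup.zpowers_eq_closure, ha, Subgroup.card_top, hcard]
  have := hp.two_le
  nlinarith [hord, h1]

end FermatAux


open FermatAux

theorem stmt14 (p e f : ℕ) (hp : p.Prime) (hodd : Odd p) (he : 1 ≤ e)
    (hf1 : 1 ≤ f) (hfe : f ≤ e) (n : ℕ) (hn : n = p ^ e) (q : ℕ) (hq : q = 1 + p ^ f)
    (x y : Gf n q) (hgen : Subgroup.closure {x, y} = ⊤) :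
    orderOf x = n ∧ orderOf y = n ∧ orderOf (x * y) = n := by
  have hp2 : 2 ≤ p := hp.two_le
  have hnpos : 1 ≤ n := by rw [hn]; exact Nat.one_le_pow _ _ hp.pos
  -- basic casts
  have hpn : ((n : ℕ) : ZMod p) = 0 := by
    rw [ZMod.natCast_eq_zero_iff, hn]
    exact dvd_pow_self p (by omega)
  have hqp : ((q : ℕ) : ZMod p) = 1 := by
    rw [hq]
    push_cast
    rw [show ((p : ZMod p)) = 0 from ZMod.natCast_self p, zero_pow (by omega), add_zero]
  have hdvd_f : (p : ℤ) ^ f ∣ (q : ℤ) - 1 := by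
    refine ⟨1, ?_⟩
    rw [hq]; push_cast; ring
  have hcop : Nat.Coprime q n := by
    rw [hn]
    refine Nat.Coprime.pow_right e (Nat.Coprime.symm ((hp.coprime_iff_not_dvd).mpr ?_))
    intro hdvd
    have hpf : p ∣ p ^ f := dvd_pow_self p (by omega)
    rw [hq] at hdvd
    have : p ∣ 1 := (Nat.dvd_add_right hpf).mp (by rwa [Nat.add_comm] at hdvd)
    have := Nat.dvd_one.mp this
    omega
  have hqn_unit : (ZMod.unitOfCoprime q hcop) ^ n = 1 := by
    ext
    rw [Units.val_pow_eq_pow_val, ZMod.coe_unitOfCoprime, Units.val_one]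
    have h1 : (p : ℤ) ^ (f + e) ∣ (q : ℤ) ^ (p ^ e) - 1 := fermat_aux_pow_pt hp hf1 hdvd_f e
    have h2 : (n : ℤ) ∣ (q : ℤ) ^ n - 1 := by
      rw [hn]
      push_cast
      exact dvd_trans (pow_dvd_pow (p : ℤ) (by omega)) h1
    have h3 : (((q : ℤ) ^ n - 1 : ℤ) : ZMod n) = 0 := (ZMod.intCast_zmod_eq_zero_iff_dvd _ n).mpr h2
    push_cast at h3
    have h4 : ((q : ZMod n)) ^ n - 1 = 0 := by exact_mod_cast h3
    linear_combination h4
  have horderh : ∀ k : ℕ, (hGen n q) ^ k = 1 → ((k : ℕ) : ZMod n) = 0 :=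
    fun k hk => h_pow_eq_one_imp hcop hqn_unit hk
  -- exponent n
  have hexp : ∀ z : Gf n q, z ^ n = 1 := by
    intro z
    obtain ⟨u, s, rfl⟩ := normal_form hnpos z
    rw [pow_formula]
    have hgn : (gGen n q) ^ (u * n) = 1 := by rw [mul_comm, pow_mul, g_pow_n, one_pow]
    have hr1 : (p : ℤ) ^ f ∣ ((q : ℤ) ^ u) - 1 :=
      dvd_trans hdvd_f (FermatAux.sub_one_dvd_pow_sub_one _ u)
    have h3 := fermat_aux_sum_pt hp hodd hf1 hr1 e
    have hσ : (n : ℤ) ∣ ((∑ i ∈ Finset.range n, (q ^ u) ^ i : ℕ) : ℤ) := by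
      have hcast : ((∑ i ∈ Finset.range n, (q ^ u) ^ i : ℕ) : ℤ) =
          ∑ i ∈ Finset.range (p ^ e), ((q : ℤ) ^ u) ^ i := by
        rw [hn]; push_cast; rfl
      rw [hcast, hn]
      push_cast
      have h4 : ((p : ℤ)) ^ e ∣ (∑ i ∈ Finset.range (p ^ e), ((q : ℤ) ^ u) ^ i) - p ^ e :=
        dvd_trans (pow_dvd_pow (p : ℤ) (by omega)) h3
      have := dvd_add h4 (dvd_refl ((p : ℤ) ^ e))
      simpa using this
    have hσn : n ∣ ∑ i ∈ Finset.range n, (q ^ u) ^ i := by exact_mod_cast hσ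
    obtain ⟨c, hc⟩ : n ∣ s * ∑ i ∈ Finset.range n, (q ^ u) ^ i := Dvd.dvd.mul_left hσn s
    rw [hgn, one_mul, hc, pow_mul, h_pow_n, one_pow]
  -- the homomorphism to (Z/p)²
  set Ψ : Gf n q →* Multiplicative (ZMod p) × Multiplicative (ZMod p) :=
    (phiG n q p hpn).prod (phiH n q p hpn hqp) with hΨ
  have hΨpow : ∀ u s : ℕ, Ψ ((gGen n q) ^ u * (hGen n q) ^ s) =
      (Multiplicative.ofAdd ((u : ℕ) : ZMod p), Multiplicative.ofAdd ((s : ℕ) : ZMod p)) := by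
    intro u s
    rw [map_mul, map_pow, map_pow, hΨ]
    simp only [MonoidHom.prod_apply, phiG_g, phiG_h, phiH_g, phiH_h]
    rw [Prod.pow_def, Prod.pow_def, Prod.mk_mul_mk, one_pow, one_pow, mul_one, one_mul,
      ← ofAdd_nsmul, ← ofAdd_nsmul, nsmul_eq_mul, nsmul_eq_mul, mul_one, mul_one]
  -- key: order of any element with nontrivial image
  have key : ∀ z : Gf n q, Ψ z ≠ 1 → orderOf z = n := by
    intro z hz
    obtain ⟨u, s, rfl⟩ := normal_form hnpos z
    have hus : ¬(p ∣ u ∧ p ∣ s) := by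
      rintro ⟨hu, hs⟩
      apply hz
      rw [hΨpow]
      have h1 : ((u : ℕ) : ZMod p) = 0 := (ZMod.natCast_eq_zero_iff _ _).mpr hu
      have h2 : ((s : ℕ) : ZMod p) = 0 := (ZMod.natCast_eq_zero_iff _ _).mpr hs
      rw [h1, h2]
      rfl
    obtain ⟨e', rfl⟩ : ∃ e', e = e' + 1 := ⟨e - 1, by omega⟩
    have hm1 : (gGen n q ^ u * hGen n q ^ s) ^ (p ^ e') ≠ 1 := by
      intro hm1
      rw [pow_formula] at hm1
      set σ : ℕ := ∑ i ∈ Finset.range (p ^ e'), (q ^ u) ^ i with hσdef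
      -- first: p ∣ u, via phiG at level n
      have hnn : ((n : ℕ) : ZMod n) = 0 := ZMod.natCast_self n
      have h1 := congrArg (phiG n q n hnn) hm1
      rw [map_one, map_mul, map_pow, map_pow, phiG_g, phiG_h, one_pow, mul_one,
        ← ofAdd_nsmul, nsmul_eq_mul, mul_one] at h1
      have h2 : ((u * p ^ e' : ℕ) : ZMod n) = 0 := by
        have := congrArg Multiplicative.toAdd h1
        simpa using this
      have h3 : p ^ (e' + 1) ∣ u * p ^ e' := by
        rw [← hn]
        exact (ZMod.natCast_eq_zero_iff _ _).mp h2
      have hpu : p ∣ u := by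
        obtain ⟨c, hc⟩ := h3
        have hc' : u * p ^ e' = (p * c) * p ^ e' := by rw [hc]; ring
        have := Nat.eq_of_mul_eq_mul_right (pow_pos hp.pos e') hc'
        exact ⟨c, this⟩
      have hps : ¬p ∣ s := fun hs => hus ⟨hpu, hs⟩
      -- kill the g part
      have hgum : (gGen n q) ^ (u * p ^ e') = 1 := by
        obtain ⟨c, hc⟩ := hpu
        have : u * p ^ e' = n * c := by rw [hc, hn]; ring
        rw [this, pow_mul, g_pow_n, one_pow]
      rw [hgum, one_mul] at hm1
      have hcast := horderh _ hm1
      have hdsσ : (p : ℤ) ^ (e' + 1) ∣ (s : ℤ) * (σ : ℤ) := by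
        have := (ZMod.natCast_eq_zero_iff _ _).mp hcast
        rw [hn] at this
        exact_mod_cast this
      -- number theory: σ ≡ p^e' mod p^(e'+1)
      have h4 : (p : ℤ) ^ (f + 1) ∣ (q : ℤ) ^ p - 1 := fermat_aux_pow_p hp hf1 hdvd_f
      have h5 : (p : ℤ) ^ (f + 1) ∣ ((q : ℤ) ^ u) - 1 := by
        obtain ⟨c, hc⟩ := hpu
        have : (q : ℤ) ^ u = ((q : ℤ) ^ p) ^ c := by rw [← pow_mul, hc]
        rw [this]
        exact dvd_trans h4 (FermatAux.sub_one_dvd_pow_sub_one _ c)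
      have h6 := fermat_aux_sum_pt hp hodd (k := f + 1) (by omega) h5 e'
      have h7 : (p : ℤ) ^ (e' + 1) ∣ (σ : ℤ) - (p : ℤ) ^ e' := by
        have hcast2 : ((σ : ℕ) : ℤ) = ∑ i ∈ Finset.range (p ^ e'), ((q : ℤ) ^ u) ^ i := by
          rw [hσdef]; push_cast; rfl
        rw [hcast2]
        exact dvd_trans (pow_dvd_pow (p : ℤ) (by omega : e' + 1 ≤ f + 1 + e')) h6
      have h8 : (p : ℤ) ^ (e' + 1) ∣ (s : ℤ) * (p : ℤ) ^ e' := by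
        have := dvd_sub hdsσ (Dvd.dvd.mul_left h7 (s : ℤ))
        have heq : (s : ℤ) * σ - (s : ℤ) * ((σ : ℤ) - (p : ℤ) ^ e') = (s : ℤ) * (p : ℤ) ^ e' := by
          ring
        rwa [heq] at this
      have hps2 : (p : ℤ) ∣ (s : ℤ) := by
        have h9 : (p : ℤ) ^ e' * (p : ℤ) ∣ (s : ℤ) * (p : ℤ) ^ e' := by
          rw [← pow_succ]; exact h8
        rw [mul_comm ((s:ℤ)) _] at h9
        exact (mul_dvd_mul_iff_left (pow_ne_zero e' (by exact_mod_cast hp.pos.ne'))).mp h9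
      exact hps (by exact_mod_cast hps2)
    -- conclude
    have hdvd : orderOf (gGen n q ^ u * hGen n q ^ s) ∣ p ^ (e' + 1) := by
      rw [← hn]; exact orderOf_dvd_of_pow_eq_one (hexp _)
    obtain ⟨j, hj, hoz⟩ := (Nat.dvd_prime_pow hp).mp hdvd
    rcases Nat.lt_or_ge j (e' + 1) with hlt | hge
    · exfalso
      apply hm1
      refine orderOf_dvd_iff_pow_eq_one.mp ?_
      rw [hoz]
      exact pow_dvd_pow p (by omega)
    · rw [hoz, hn]
      congr 1
      omega
  -- surjectivity of Ψ
  haveI : NeZero p := ⟨by omega⟩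
  have hrange : Ψ.range = ⊤ := by
    rw [eq_top_iff]
    rintro ⟨a, b⟩ -
    refine ⟨(gGen n q) ^ (a.toAdd.val) * (hGen n q) ^ (b.toAdd.val), ?_⟩
    rw [hΨpow]
    have h1 : ((a.toAdd.val : ℕ) : ZMod p) = a.toAdd := ZMod.natCast_rightInverse a.toAdd
    have h2 : ((b.toAdd.val : ℕ) : ZMod p) = b.toAdd := ZMod.natCast_rightInverse b.toAdd
    rw [h1, h2]
    simp
  have hclosure : Subgroup.closure {Ψ x, Ψ y} = ⊤ := by
    have h1 : Subgroup.closure (Ψ '' {x, y}) = Subgroup.map Ψ (Subgroup.closure {x, y}) :=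
      (MonoidHom.map_closure Ψ _).symm
    rw [Set.image_insert_eq, Set.image_singleton] at h1
    rw [h1, hgen, ← MonoidHom.range_eq_map, hrange]
  have hsub : ∀ c : Multiplicative (ZMod p) × Multiplicative (ZMod p),
      ({Ψ x, Ψ y} : Set _) ⊆ ↑(Subgroup.closure {c}) → False := by
    intro c hc
    have : (⊤ : Subgroup _) ≤ Subgroup.closure {c} := by
      rw [← hclosure]
      exact (Subgroup.closure_le _).mpr hc
    exact closure_single_ne_top p hp c (top_le_iff.mp this)
  have hx : Ψ x ≠ 1 := by
    intro h1
    refine hsub (Ψ y) ?_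
    intro m hm
    rcases hm with rfl | rfl
    · rw [h1]; exact one_mem _
    · exact Subgroup.subset_closure rfl
  have hy : Ψ y ≠ 1 := by
    intro h1
    refine hsub (Ψ x) ?_
    intro m hm
    rcases hm with rfl | rfl
    · exact Subgroup.subset_closure rfl
    · rw [h1]; exact one_mem _
  have hxy : Ψ (x * y) ≠ 1 := by
    intro h1
    rw [map_mul] at h1
    have h2 : Ψ x = (Ψ y)⁻¹ := by
      rw [eq_inv_iff_mul_eq_one]; exact h1
    refine hsub (Ψ y) ?_
    intro m hm
    rcases hm with rfl | rfl
    · rw [h2]; exact Subgroup.inv_mem _ (Subgroup.subset_closure rfl)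
    · exact Subgroup.subset_closure rfl
  exact ⟨key x hx, key y hy, key (x * y) hxy⟩
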